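/- Let (Ω,μ) be a measure space, let r ∈ (0,∞], let m ∈ ℕ, and let E_1,…,E_m ⊆ Ω be pairwise disjoint measurable sets whose measures s_k := μ(E_k) satisfy 0 < s_k < ∞ and s_{k+1} ≤ s_k/2 for k = 1,…,m−1. Define u_k := s_k^{−1/r}·χ_{E_k} and u := ∑_{k=1}^m u_k. Then ‖u_k‖_{L^{r,∞}} = 1 for every k = 1,…,m, while ‖u‖_{L^{r,∞}} ≤ 2^{1/r}. -/

import Mathlib

open MeasureTheory ENNReal
open scoped NNReal

private lemma aux_rpow_mul (p : ℝ) (s : ℝ≥0∞) (h0 : s ≠ 0) (ht : s ≠ ∞) :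
    ENNReal.ofReal (s.toReal ^ (-(1/p))) * s ^ (1/p) = 1 := by
  rw [← ENNReal.ofReal_rpow_of_pos (ENNReal.toReal_pos h0 ht), ENNReal.ofReal_toReal ht,
    ← ENNReal.rpow_add _ _ h0 ht, neg_add_cancel, ENNReal.rpow_zero]

private lemma geo_sum_le (n : ℕ) : ∑ d ∈ Finset.range n, (2⁻¹:ℝ≥0∞)^d ≤ 2 := by
  calc ∑ d ∈ Finset.range n, (2⁻¹:ℝ≥0∞)^d ≤ ∑' d, (2⁻¹:ℝ≥0∞)^d := ENNReal.sum_le_tsum _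
  _ = (1 - 2⁻¹)⁻¹ := ENNReal.tsum_geometric _
  _ = 2 := by rw [ENNReal.one_sub_inv_two, inv_inv]

private lemma geo_step {m : ℕ} (s : Fin m → ℝ≥0∞)
    (hhalf : ∀ (k : ℕ) (hk : k + 1 < m), s ⟨k+1, hk⟩ ≤ s ⟨k, Nat.lt_of_succ_lt hk⟩ / 2) :
    ∀ (i j : Fin m), i ≤ j → s j ≤ s i * 2⁻¹ ^ (j.1 - i.1) := by
  have key : ∀ (d : ℕ) (i : Fin m) (h : i.1 + d < m), s ⟨i.1 + d, h⟩ ≤ s i * 2⁻¹ ^ d := by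
    intro d
    induction d with
    | zero => intro i h; simp
    | succ n ih =>
      intro i h
      have h' : i.1 + n < m := by omega
      calc s ⟨i.1 + (n+1), h⟩ = s ⟨i.1 + n + 1, by omega⟩ := by congr 1
        _ ≤ s ⟨i.1 + n, h'⟩ / 2 := hhalf (i.1 + n) (by omega)
        _ ≤ (s i * 2⁻¹ ^ n) / 2 := by gcongr; exact ih i h'
        _ = s i * 2⁻¹ ^ (n+1) := by rw [div_eq_mul_inv, pow_succ, mul_assoc]
  intro i j hij
  have hnat : i.1 ≤ j.1 := hij
  have hj : j = ⟨i.1 + (j.1 - i.1), by omega⟩ := by ext; simp; omega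
  rw [hj]
  simpa using key (j.1 - i.1) i (by omega)

private lemma sum_ind_mem {α : Type*} {m : ℕ} {E : Fin m → Set α}
    (hEdisj : ∀ i j, i ≠ j → Disjoint (E i) (E j)) (c : Fin m → ℝ) {x : α} {k0 : Fin m}
    (hx : x ∈ E k0) :
    ∑ k, c k * (E k).indicator 1 x = c k0 := by
  rw [Finset.sum_eq_single k0]
  · rw [Set.indicator_of_mem hx]; simp
  · intro j _ hj
    have hxj : x ∉ E j := fun hxj => Set.disjoint_left.mp (hEdisj j k0 hj) hxj hx
    rw [Set.indicator_of_notMem hxj, mul_zero]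
  · simp

private lemma sum_ind_notmem {α : Type*} {m : ℕ} {E : Fin m → Set α}
    (c : Fin m → ℝ) {x : α} (hx : ∀ k, x ∉ E k) :
    ∑ k, c k * (E k).indicator 1 x = 0 :=
  Finset.sum_eq_zero fun k _ => by rw [Set.indicator_of_notMem (hx k), mul_zero]

private lemma sum_S_le {m : ℕ} (s : Fin m → ℝ≥0∞)
    (hgeo : ∀ (i j : Fin m), i ≤ j → s j ≤ s i * 2⁻¹ ^ (j.1 - i.1))
    (S : Finset (Fin m)) (hSne : S.Nonempty) :
    ∑ k ∈ S, s k ≤ 2 * s (S.min' hSne) := by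
  set k0 := S.min' hSne with hk0
  have e_inj : ∀ a ∈ S, ∀ b ∈ S, a.1 - k0.1 = b.1 - k0.1 → a = b := by
    intro a ha b hb hab
    have ha'' : k0.1 ≤ a.1 := S.min'_le a ha
    have hb'' : k0.1 ≤ b.1 := S.min'_le b hb
    exact Fin.ext (by omega)
  calc ∑ k ∈ S, s k
      ≤ ∑ k ∈ S, s k0 * 2⁻¹ ^ (k.1 - k0.1) :=
        Finset.sum_le_sum fun k hk => hgeo k0 k (S.min'_le k hk)
    _ = ∑ d ∈ S.image (fun k : Fin m => k.1 - k0.1), s k0 * 2⁻¹ ^ d :=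
        (Finset.sum_image (f := fun d => s k0 * (2⁻¹:ℝ≥0∞) ^ d) e_inj).symm
    _ ≤ ∑ d ∈ Finset.range m, s k0 * 2⁻¹ ^ d := by
        refine Finset.sum_le_sum_of_subset fun d hd => ?_
        simp only [Finset.mem_image] at hd
        obtain ⟨k, _, rfl⟩ := hd
        exact Finset.mem_range.mpr (lt_of_le_of_lt (Nat.sub_le _ _) k.2)
    _ = s k0 * ∑ d ∈ Finset.range m, 2⁻¹ ^ d := by rw [← Finset.mul_sum]
    _ ≤ s k0 * 2 := mul_le_mul_right (geo_sum_le m) _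
    _ = 2 * s k0 := mul_comm _ _

/-- The weak Lebesgue quasinorm `‖u‖_{L^{r,∞}} = sup_{λ>0} λ · μ{|u| > λ}^{1/r}`,
with the convention that for `r = ∞` it is the essential supremum of `|u|`. -/
noncomputable def weakNorm {α : Type*} [MeasurableSpace α] (μ : Measure α)
    (r : ℝ≥0∞) (u : α → ℝ) : ℝ≥0∞ :=
  if r = ∞ then essSup (fun x => (‖u x‖₊ : ℝ≥0∞)) μ
  else ⨆ l : ℝ≥0, (l : ℝ≥0∞) * μ {x | (l : ℝ) < |u x|} ^ (1 / r.toReal)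

set_option maxHeartbeats 1000000 in
/-- For pairwise disjoint measurable sets `E_1,…,E_m` of finite positive
measures `s_k` with `s_{k+1} ≤ s_k / 2`, the functions `u_k = s_k^{-1/r} χ_{E_k}`
satisfy `‖u_k‖_{L^{r,∞}} = 1` while `‖∑ u_k‖_{L^{r,∞}} ≤ 2^{1/r}`.
(Conventions: `s^{-1/∞} = 1` and `2^{1/∞} = 1`, realized via `r.toReal = 0` for `r = ∞`.) -/
theorem weakNorm_of_disjoint_geometric_indicators
    {α : Type*} [MeasurableSpace α] (μ : Measure α)
    (r : ℝ≥0∞) (hr : 0 < r) (m : ℕ) (E : Fin m → Set α)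
    (hEmeas : ∀ k, MeasurableSet (E k))
    (hEdisj : ∀ i j, i ≠ j → Disjoint (E i) (E j))
    (hEpos : ∀ k, 0 < μ (E k))
    (hEfin : ∀ k, μ (E k) < ∞)
    (hhalf : ∀ (k : ℕ) (hk : k + 1 < m),
      μ (E ⟨k + 1, hk⟩) ≤ μ (E ⟨k, Nat.lt_of_succ_lt hk⟩) / 2) :
    (∀ k, weakNorm μ r
        (fun x => (μ (E k)).toReal ^ (-(1 / r.toReal)) * (E k).indicator 1 x) = 1) ∧
      weakNorm μ r
        (fun x => ∑ k, (μ (E k)).toReal ^ (-(1 / r.toReal)) * (E k).indicator 1 x)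
        ≤ (2 : ℝ≥0∞) ^ (1 / r.toReal) := by
  by_cases hrtop : r = ∞
  · subst hrtop
    have h0 : (1:ℝ) / (∞:ℝ≥0∞).toReal = 0 := by simp
    simp only [weakNorm, h0, neg_zero, Real.rpow_zero, one_mul, ENNReal.rpow_zero,
      if_true, eq_self_iff_true]
    constructor
    · intro k
      apply le_antisymm
      · refine essSup_le_of_ae_le 1 (Filter.Eventually.of_forall fun x => ?_)
        by_cases hx : x ∈ E k <;>
          simp [Set.indicator_of_mem, Set.indicator_of_notMem, hx]
      · by_contra h
        push_neg at h
        have hae := ae_iff.mp (ae_lt_of_essSup_lt h)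
        refine absurd (measure_mono_null (fun x hx => ?_) hae) (hEpos k).ne'
        show ¬ (‖(E k).indicator (1 : α → ℝ) x‖₊ : ℝ≥0∞) < 1
        simp [Set.indicator_of_mem hx]
    · refine essSup_le_of_ae_le 1 (Filter.Eventually.of_forall fun x => ?_)
      show (‖∑ k, (E k).indicator (1 : α → ℝ) x‖₊ : ℝ≥0∞) ≤ 1
      by_cases hmem : ∃ k, x ∈ E k
      · obtain ⟨k0, hk0⟩ := hmem
        have h1 := sum_ind_mem hEdisj (fun _ => (1:ℝ)) hk0
        simp only [one_mul] at h1
        simp [h1]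
      · push_neg at hmem
        have h1 := sum_ind_notmem (E := E) (fun _ => (1:ℝ)) hmem
        simp only [one_mul] at h1
        simp [h1]
  · have hppos : 0 < r.toReal := ENNReal.toReal_pos hr.ne' hrtop
    have hep : (0:ℝ) < 1/r.toReal := by positivity
    simp only [weakNorm, if_neg hrtop]
    have hcpos : ∀ k, 0 < (μ (E k)).toReal ^ (-(1/r.toReal)) := fun k =>
      Real.rpow_pos_of_pos (ENNReal.toReal_pos (hEpos k).ne' (hEfin k).ne) _
    constructor
    · intro k
      have hset : ∀ l : ℝ≥0, (l:ℝ) < (μ (E k)).toReal ^ (-(1/r.toReal)) →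
          {x | (l:ℝ) < |(μ (E k)).toReal ^ (-(1/r.toReal)) * (E k).indicator 1 x|} = E k := by
        intro l hl
        ext x
        simp only [Set.mem_setOf_eq]
        by_cases hx : x ∈ E k
        · simp only [Set.indicator_of_mem hx, Pi.one_apply, mul_one, abs_of_pos (hcpos k)]
          exact iff_of_true hl hx
        · simp only [Set.indicator_of_notMem hx, mul_zero, abs_zero]
          exact iff_of_false (not_lt.2 l.coe_nonneg) hx
      have hset' : ∀ l : ℝ≥0, ¬ (l:ℝ) < (μ (E k)).toReal ^ (-(1/r.toReal)) →
          {x | (l:ℝ) < |(μ (E k)).toReal ^ (-(1/r.toReal)) * (E k).indicator 1 x|} = ∅ := by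
        intro l hl
        ext x
        simp only [Set.mem_setOf_eq, Set.mem_empty_iff_false, iff_false, not_lt]
        by_cases hx : x ∈ E k
        · simp only [Set.indicator_of_mem hx, Pi.one_apply, mul_one, abs_of_pos (hcpos k)]
          exact not_lt.1 hl
        · simp only [Set.indicator_of_notMem hx, mul_zero, abs_zero]
          exact l.coe_nonneg
      have hone : ENNReal.ofReal ((μ (E k)).toReal ^ (-(1/r.toReal)))
          * μ (E k) ^ (1/r.toReal) = 1 :=
        aux_rpow_mul _ (μ (E k)) (hEpos k).ne' (hEfin k).ne
      apply le_antisymm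
      · refine iSup_le fun l => ?_
        by_cases hl : (l:ℝ) < (μ (E k)).toReal ^ (-(1/r.toReal))
        · rw [hset l hl]
          calc (l:ℝ≥0∞) * μ (E k) ^ (1/r.toReal)
              ≤ ENNReal.ofReal ((μ (E k)).toReal ^ (-(1/r.toReal)))
                  * μ (E k) ^ (1/r.toReal) := by
                gcongr
                rw [← ENNReal.ofReal_coe_nnreal]
                exact ENNReal.ofReal_le_ofReal hl.le
            _ = 1 := hone
        · rw [hset' l hl, measure_empty, ENNReal.zero_rpow_of_pos hep, mul_zero]
          exact zero_le_one
      · refine le_of_forall_lt fun a ha => ?_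
        have hM0 : μ (E k) ^ (1/r.toReal) ≠ 0 :=
          (ENNReal.rpow_pos (hEpos k) (hEfin k).ne).ne'
        have hMt : μ (E k) ^ (1/r.toReal) ≠ ∞ :=
          ENNReal.rpow_ne_top_of_nonneg hep.le (hEfin k).ne
        have ha' : a / μ (E k) ^ (1/r.toReal)
            < ENNReal.ofReal ((μ (E k)).toReal ^ (-(1/r.toReal))) :=
          (ENNReal.div_lt_iff (Or.inl hM0) (Or.inl hMt)).mpr (by rwa [hone])
        obtain ⟨l, hal, hlc⟩ := ENNReal.lt_iff_exists_nnreal_btwn.mp ha'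
        have hlcR : (l:ℝ) < (μ (E k)).toReal ^ (-(1/r.toReal)) := by
          rw [← ENNReal.ofReal_coe_nnreal] at hlc
          exact (ENNReal.ofReal_lt_ofReal_iff (hcpos k)).mp hlc
        have halM : a < (l:ℝ≥0∞) * μ (E k) ^ (1/r.toReal) :=
          (ENNReal.div_lt_iff (Or.inl hM0) (Or.inl hMt)).mp hal
        refine lt_of_lt_of_le ?_
          (le_iSup (fun l : ℝ≥0 => (l:ℝ≥0∞) *
            μ {x | (l:ℝ) < |(μ (E k)).toReal ^ (-(1/r.toReal)) * (E k).indicator 1 x|}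
              ^ (1/r.toReal)) l)
        rw [hset l hlcR]
        exact halM
    · refine iSup_le fun l => ?_
      set c : Fin m → ℝ := fun k => (μ (E k)).toReal ^ (-(1/r.toReal)) with hcdef
      set S : Finset (Fin m) := Finset.univ.filter (fun k => (l:ℝ) < c k) with hS
      have hU : {x | (l:ℝ) < |∑ k, c k * (E k).indicator 1 x|} = ⋃ k ∈ S, E k := by
        ext x
        simp only [Set.mem_setOf_eq, Set.mem_iUnion, exists_prop, hS, Finset.mem_filter,
          Finset.mem_univ, true_and]
        constructor
        · intro hx
          by_cases hmem : ∃ k, x ∈ E k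
          · obtain ⟨k0, hk0⟩ := hmem
            rw [sum_ind_mem hEdisj c hk0, abs_of_pos (hcpos k0)] at hx
            exact ⟨k0, hx, hk0⟩
          · push_neg at hmem
            rw [sum_ind_notmem c hmem] at hx
            exact absurd hx (by simp)
        · rintro ⟨k0, hlk, hk0⟩
          rw [sum_ind_mem hEdisj c hk0, abs_of_pos (hcpos k0)]
          exact hlk
      have hdisjS : Set.PairwiseDisjoint (↑S : Set (Fin m)) E :=
        fun i _ j _ hij => hEdisj i j hij
      rw [hU, measure_biUnion_finset hdisjS (fun k _ => hEmeas k)]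
      rcases S.eq_empty_or_nonempty with hSe | hSne
      · rw [hSe, Finset.sum_empty, ENNReal.zero_rpow_of_pos hep, mul_zero]
        exact zero_le
      · have hk0S : S.min' hSne ∈ S := S.min'_mem hSne
        set k0 := S.min' hSne with hk0def
        have hlk0 : (l:ℝ) < c k0 := by
          have h2 := hk0S
          rw [hS, Finset.mem_filter] at h2
          exact h2.2
        have hgeo := geo_step (fun k => μ (E k)) hhalf
        have hsum : ∑ k ∈ S, μ (E k) ≤ 2 * μ (E k0) :=
          sum_S_le (fun k => μ (E k)) hgeo S hSne
        have hone : ENNReal.ofReal (c k0) * μ (E k0) ^ (1/r.toReal) = 1 :=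
          aux_rpow_mul _ (μ (E k0)) (hEpos k0).ne' (hEfin k0).ne
        calc (l:ℝ≥0∞) * (∑ k ∈ S, μ (E k)) ^ (1/r.toReal)
            ≤ ENNReal.ofReal (c k0) * (2 * μ (E k0)) ^ (1/r.toReal) := by
              gcongr
              rw [← ENNReal.ofReal_coe_nnreal]
              exact ENNReal.ofReal_le_ofReal hlk0.le
          _ = (2:ℝ≥0∞) ^ (1/r.toReal) * (ENNReal.ofReal (c k0) * μ (E k0) ^ (1/r.toReal)) := by
              rw [ENNReal.mul_rpow_of_nonneg _ _ hep.le]; ring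
          _ = (2:ℝ≥0∞) ^ (1/r.toReal) := by rw [hone, mul_one]
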